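/- arXiv:2507.04128 — 4 statements merged into one kernel-verified Lean document; each statement's English description precedes it below -/
import Mathlib

section
/- Let k ≥ 2, n = 3k − 3, and let 𝒱 ⊆ M_n(ℂ) be the span of the three diagonal projections A_1 = diag(I_{k−1}, 0, 0), A_2 = diag(0, I_{k−1}, 0), A_3 = diag(0, 0, I_{k−1}) (each block of size (k−1) × (k−1)). Then 𝒱 is an operator system and there is no rank-k projection P ∈ M_n(ℂ) with P 𝒱 P = span{P}; that is, 𝒱 has no k-anticlique. -/
private lemma card_ico_subtype (n a b : ℕ) (hb : b ≤ n) :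
    Fintype.card {p : Fin n // a ≤ (p : ℕ) ∧ (p : ℕ) < b} = b - a := by
  have e : {p : Fin n // a ≤ (p : ℕ) ∧ (p : ℕ) < b} ≃ (Finset.Ico a b : Finset ℕ) :=
    { toFun := fun q => ⟨(q.1 : ℕ), Finset.mem_Ico.mpr q.2⟩
      invFun := fun r => ⟨⟨r.1, lt_of_lt_of_le (Finset.mem_Ico.mp r.2).2 hb⟩,
        (Finset.mem_Ico.mp r.2).1, (Finset.mem_Ico.mp r.2).2⟩
      left_inv := fun q => by ext; rfl
      right_inv := fun r => by ext; rfl }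
  rw [Fintype.card_congr e, Fintype.card_coe, Nat.card_Ico]

private lemma rank_smul_le_aux {n : ℕ} (c : ℂ) (M : Matrix (Fin n) (Fin n) ℂ) :
    (c • M).rank ≤ M.rank := by
  have h : c • M = (c • (1 : Matrix (Fin n) (Fin n) ℂ)) * M := by
    rw [Matrix.smul_mul, one_mul]
  rw [h]
  exact Matrix.rank_mul_le_right _ _

-- For k ≥ 2 and n = 3k - 3, the span of the three diagonal projections
-- diag(I_{k-1},0,0), diag(0,I_{k-1},0), diag(0,0,I_{k-1}) is an operator system
-- with no k-anticlique.
open Matrix in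
theorem stmt_6 (k : ℕ) (hk : 2 ≤ k)
    (A₁ A₂ A₃ : Matrix (Fin (3 * k - 3)) (Fin (3 * k - 3)) ℂ)
    (hA₁ : A₁ = Matrix.diagonal (fun (p : Fin (3 * k - 3)) => if (p : ℕ) < k - 1 then 1 else 0))
    (hA₂ : A₂ = Matrix.diagonal (fun (p : Fin (3 * k - 3)) =>
      if k - 1 ≤ (p : ℕ) ∧ (p : ℕ) < 2 * (k - 1) then 1 else 0))
    (hA₃ : A₃ = Matrix.diagonal (fun (p : Fin (3 * k - 3)) => if 2 * (k - 1) ≤ (p : ℕ) then 1 else 0))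
    (V : Submodule ℂ (Matrix (Fin (3 * k - 3)) (Fin (3 * k - 3)) ℂ))
    (hV : V = Submodule.span ℂ {A₁, A₂, A₃}) :
    ((1 : Matrix (Fin (3 * k - 3)) (Fin (3 * k - 3)) ℂ) ∈ V ∧
      (∀ A ∈ V, Aᴴ ∈ V)) ∧
    ¬ ∃ P : Matrix (Fin (3 * k - 3)) (Fin (3 * k - 3)) ℂ,
        Pᴴ = P ∧ P * P = P ∧ P.rank = k ∧
        (fun A => P * A * P) '' (V : Set (Matrix (Fin (3 * k - 3)) (Fin (3 * k - 3)) ℂ)) =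
          (Submodule.span ℂ {P} :
            Submodule ℂ (Matrix (Fin (3 * k - 3)) (Fin (3 * k - 3)) ℂ)) := by
  have hsum : A₁ + A₂ + A₃ = 1 := by
    subst hA₁ hA₂ hA₃
    ext i j
    rcases eq_or_ne i j with rfl | hij
    · have hi := i.isLt
      simp only [Matrix.add_apply, Matrix.diagonal_apply_eq, Matrix.one_apply_eq]
      split_ifs <;> first | omega | norm_num
    · simp [Matrix.diagonal_apply_ne _ hij, Matrix.one_apply_ne hij]
  have hA₁V : A₁ ∈ V := hV ▸ Submodule.subset_span (by simp)
  have hA₂V : A₂ ∈ V := hV ▸ Submodule.subset_span (by simp)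
  have hA₃V : A₃ ∈ V := hV ▸ Submodule.subset_span (by simp)
  have h1V : (1 : Matrix (Fin (3 * k - 3)) (Fin (3 * k - 3)) ℂ) ∈ V := by
    rw [← hsum]; exact add_mem (add_mem hA₁V hA₂V) hA₃V
  have herm : ∀ B : Matrix (Fin (3*k-3)) (Fin (3*k-3)) ℂ,
      B ∈ ({A₁, A₂, A₃} : Set _) → Bᴴ = B := by
    rintro B (rfl | rfl | rfl) <;>
      · subst hA₁ hA₂ hA₃
        ext i j
        rcases eq_or_ne i j with rfl | hij
        · simp only [Matrix.conjTranspose_apply, Matrix.diagonal_apply_eq]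
          split_ifs <;> simp
        · simp [Matrix.conjTranspose_apply, Matrix.diagonal_apply_ne _ hij,
            Matrix.diagonal_apply_ne _ (Ne.symm hij)]
  refine ⟨⟨h1V, ?_⟩, ?_⟩
  · intro A hA
    rw [hV] at hA ⊢
    induction hA using Submodule.span_induction with
    | mem x hx => rw [herm x hx]; exact Submodule.subset_span hx
    | zero => simp only [conjTranspose_zero]; exact Submodule.zero_mem _
    | add a b _ _ ha hb => rw [conjTranspose_add]; exact add_mem ha hb
    | smul c a _ ha => rw [conjTranspose_smul]; exact Submodule.smul_mem _ _ ha
  · rintro ⟨P, hPh, hPP, hPrank, himg⟩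
    have key : ∀ B : Matrix (Fin (3*k-3)) (Fin (3*k-3)) ℂ, B ∈ V → B.rank ≤ k - 1 →
        P * B * P = 0 := by
      intro B hBV hBr
      have hmem : P * B * P ∈ ((fun A => P * A * P) ''
          (V : Set (Matrix (Fin (3 * k - 3)) (Fin (3 * k - 3)) ℂ))) := ⟨B, hBV, rfl⟩
      rw [himg] at hmem
      obtain ⟨c, hc⟩ := Submodule.mem_span_singleton.mp hmem
      by_cases hc0 : c = 0
      · rw [← hc, hc0, zero_smul]
      · exfalso
        have hPle : P.rank ≤ (c • P).rank := by
          have : P = c⁻¹ • (c • P) := by rw [smul_smul, inv_mul_cancel₀ hc0, one_smul]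
          calc P.rank = (c⁻¹ • (c • P)).rank := by rw [← this]
            _ ≤ (c • P).rank := rank_smul_le_aux _ _
        have h2 : (P * B * P).rank ≤ B.rank :=
          le_trans (Matrix.rank_mul_le_left _ _) (Matrix.rank_mul_le_right _ _)
        rw [← hc] at h2
        have := le_trans hPle (le_trans h2 hBr)
        omega
    have hcards : ∀ (q : Fin (3*k-3) → Prop) [DecidablePred q] (a b : ℕ), b ≤ 3*k-3 →
        (∀ p : Fin (3*k-3), q p ↔ a ≤ (p:ℕ) ∧ (p:ℕ) < b) →
        (Matrix.diagonal (fun p => if q p then (1:ℂ) else 0)).rank = b - a := by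
      intro q _ a b hb hq
      have e : {p : Fin (3*k-3) // (if q p then (1:ℂ) else 0) ≠ 0} ≃
          {p : Fin (3*k-3) // a ≤ (p:ℕ) ∧ (p:ℕ) < b} :=
        Equiv.subtypeEquivRight (fun p => by
          rw [← hq p]; split_ifs with h <;> simp [h])
      rw [Matrix.rank_diagonal, Fintype.card_congr e]
      exact card_ico_subtype _ a b hb
    have r₁ : A₁.rank ≤ k - 1 := by
      rw [hA₁, hcards _ 0 (k-1) (by omega) (fun p => by omega)]; omega
    have r₂ : A₂.rank ≤ k - 1 := by
      rw [hA₂, hcards _ (k-1) (2*(k-1)) (by omega) (fun p => by omega)]; omega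
    have r₃ : A₃.rank ≤ k - 1 := by
      rw [hA₃, hcards _ (2*(k-1)) (3*k-3) (by omega) (fun p => by
        have := p.isLt; omega)]; omega
    have hP0 : P = 0 := by
      have k1 := key A₁ hA₁V r₁
      have k2 := key A₂ hA₂V r₂
      have k3 := key A₃ hA₃V r₃
      calc P = P * P * P := by rw [hPP, hPP]
        _ = P * (A₁ + A₂ + A₃) * P := by rw [hsum, mul_one, hPP, hPP]
        _ = P * A₁ * P + P * A₂ * P + P * A₃ * P := by noncomm_ring
        _ = 0 := by rw [k1, k2, k3]; simp
    rw [hP0, Matrix.rank_zero] at hPrank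
    omega
end

section
/- For every k ≥ 2 there exists an operator system 𝒱 ⊆ M_{3k−3}(ℂ) with no 2-clique and no k-anticlique. Combined with the fact that every operator system in M_n(ℂ) with n ≥ 3k − 2 has a 2-clique or a k-anticlique, this shows the quantum Ramsey number QR(2,k) equals 3k − 2. -/
open Matrix

-- In M_n(C): V has a 2-clique.
def HasTwoClique (n : ℕ) (V : Submodule ℂ (Matrix (Fin n) (Fin n) ℂ)) : Prop :=
  ∃ P : Matrix (Fin n) (Fin n) ℂ, Pᴴ = P ∧ P * P = P ∧ P.rank = 2 ∧
    (fun A => P * A * P) '' (V : Set (Matrix (Fin n) (Fin n) ℂ)) =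
      (fun A => P * A * P) '' Set.univ

-- In M_n(C): V has a k-anticlique.
def HasAnticlique (n k : ℕ) (V : Submodule ℂ (Matrix (Fin n) (Fin n) ℂ)) : Prop :=
  ∃ P : Matrix (Fin n) (Fin n) ℂ, Pᴴ = P ∧ P * P = P ∧ P.rank = k ∧
    (fun A => P * A * P) '' (V : Set (Matrix (Fin n) (Fin n) ℂ)) =
      (Submodule.span ℂ {P} : Submodule ℂ (Matrix (Fin n) (Fin n) ℂ))

def IsOperatorSystem (n : ℕ) (V : Submodule ℂ (Matrix (Fin n) (Fin n) ℂ)) : Prop :=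
  (1 : Matrix (Fin n) (Fin n) ℂ) ∈ V ∧ ∀ A ∈ V, Aᴴ ∈ V

namespace QRAux

noncomputable section

open Complex Module

/-- eigenvalue function: three groups of size `m` with values `1, I, -I`. -/
def fv (m : ℕ) {n : ℕ} (i : Fin n) : ℂ :=
  if i.val < m then 1 else if i.val < 2*m then Complex.I else -Complex.I

def Amat (m n : ℕ) : Matrix (Fin n) (Fin n) ℂ := Matrix.diagonal (fv m)

def Vsys (m n : ℕ) : Submodule ℂ (Matrix (Fin n) (Fin n) ℂ) :=
  Submodule.span ℂ {1, Amat m n, (Amat m n)ᴴ}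

lemma Amat_mem (m n : ℕ) : Amat m n ∈ Vsys m n :=
  Submodule.subset_span (by simp)

lemma opSystem (m n : ℕ) : IsOperatorSystem n (Vsys m n) := by
  constructor
  · exact Submodule.subset_span (by simp)
  · intro B hB
    induction hB using Submodule.span_induction with
    | mem x hx =>
      rcases hx with h | h | h
      · subst h
        simpa [Vsys] using Submodule.subset_span
          (show (1:Matrix (Fin n) (Fin n) ℂ) ∈ ({1, Amat m n, (Amat m n)ᴴ} : Set _) by simp)
      · subst h; exact Submodule.subset_span (by simp)
      · subst h
        simpa [conjTranspose_conjTranspose] using Amat_mem m n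
    | zero => simpa using (Vsys m n).zero_mem
    | add x y _ _ hx hy => simpa [conjTranspose_add] using (Vsys m n).add_mem hx hy
    | smul c x _ hx =>
      simpa [conjTranspose_smul] using (Vsys m n).smul_mem (starRingEnd ℂ c) hx

/-- a vector in the range of an idempotent is fixed by it -/
lemma fixed {n : ℕ} {P : Matrix (Fin n) (Fin n) ℂ} (hP2 : P * P = P)
    {u : Fin n → ℂ} (hu : u ∈ LinearMap.range P.mulVecLin) : P *ᵥ u = u := by
  obtain ⟨w, rfl⟩ := hu
  simp only [mulVecLin_apply, mulVec_mulVec, hP2]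

lemma star_vecMul_self {n : ℕ} {P : Matrix (Fin n) (Fin n) ℂ} (hP1 : Pᴴ = P)
    {u : Fin n → ℂ} (hu : P *ᵥ u = u) : star u ᵥ* P = star u := by
  have h := star_mulVec (M := Pᴴ) (v := u)
  rw [conjTranspose_conjTranspose] at h
  rw [← h, hP1, hu]

lemma dot_proj {n : ℕ} {P : Matrix (Fin n) (Fin n) ℂ} (hP1 : Pᴴ = P)
    {u : Fin n → ℂ} (hu : P *ᵥ u = u) (w : Fin n → ℂ) :
    star u ⬝ᵥ (P *ᵥ w) = star u ⬝ᵥ w := by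
  rw [dotProduct_mulVec, star_vecMul_self hP1 hu]

/-- the compression identity -/
lemma compress_dot {n : ℕ} {P A : Matrix (Fin n) (Fin n) ℂ} (hP1 : Pᴴ = P)
    {c : ℂ} (hPAP : P * A * P = c • P)
    {u : Fin n → ℂ} (hu : P *ᵥ u = u) :
    star u ⬝ᵥ (A *ᵥ u) = c * (star u ⬝ᵥ u) := by
  have h1 : star u ⬝ᵥ ((P * A * P) *ᵥ u) = star u ⬝ᵥ (A *ᵥ u) := by
    rw [← mulVec_mulVec, ← mulVec_mulVec, hu, dot_proj hP1 hu]
  have h2 : star u ⬝ᵥ ((c • P) *ᵥ u) = c * (star u ⬝ᵥ u) := by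
    rw [smul_mulVec, dotProduct_smul, hu]
    rfl
  rw [← h1, hPAP, h2]

/-- key dimension-count: a `(m+1)`-dim subspace of `ℂ^(3m)` contains a nonzero
vector vanishing on the `j`-th block of `m` coordinates. -/
lemma exists_supported {n m k : ℕ} (j : ℕ) (hn : n = 3*m) (hj : j < 3) (hk : k = m + 1)
    (S : Submodule ℂ (Fin n → ℂ)) (hS : finrank ℂ S = k) :
    ∃ u : Fin n → ℂ, u ∈ S ∧ u ≠ 0 ∧
      ∀ i : Fin n, j*m ≤ i.val → i.val < j*m + m → u i = 0 := by
  have he : ∀ t : Fin m, j*m + t.val < n := by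
    intro t; have := t.isLt; interval_cases j <;> omega
  set e : Fin m → Fin n := fun t => ⟨j*m + t.val, he t⟩ with hedef
  set φ : S →ₗ[ℂ] (Fin m → ℂ) := (LinearMap.funLeft ℂ ℂ e).comp S.subtype with hφdef
  have hlt : finrank ℂ (Fin m → ℂ) < finrank ℂ S := by
    rw [Module.finrank_pi, Fintype.card_fin, hS, hk]; omega
  have hker := LinearMap.ker_ne_bot_of_finrank_lt (f := φ) hlt
  rw [Submodule.ne_bot_iff] at hker
  obtain ⟨u, hu, hu0⟩ := hker
  refine ⟨(u : Fin n → ℂ), u.2, ?_, ?_⟩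
  · intro h
    exact hu0 (Subtype.ext h)
  · intro i h1 h2
    have hu' : (LinearMap.funLeft ℂ ℂ e) (u : Fin n → ℂ) = 0 := hu
    have := congrFun hu' ⟨i.val - j*m, by omega⟩
    simpa [LinearMap.funLeft_apply, hedef, Fin.ext_iff,
      show j*m + (i.val - j*m) = i.val by omega] using this

/-- real/imag accounting for the diagonal matrix -/
lemma diag_dot {n m : ℕ} (u : Fin n → ℂ) :
    star u ⬝ᵥ ((Amat m n) *ᵥ u) =
      (∑ i, if i.val < m then (normSq (u i) : ℂ) else 0)
      + Complex.I * (∑ i, if m ≤ i.val ∧ i.val < 2*m then (normSq (u i) : ℂ) else 0)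
      - Complex.I * (∑ i, if 2*m ≤ i.val then (normSq (u i) : ℂ) else 0) := by
  rw [Finset.mul_sum, Finset.mul_sum, ← Finset.sum_add_distrib, ← Finset.sum_sub_distrib,
    dotProduct]
  apply Finset.sum_congr rfl
  intro i _
  have hA : ((Amat m n) *ᵥ u) i = fv m i * u i := mulVec_diagonal _ _ _
  have hs : (star u) i * (fv m i * u i) = fv m i * (normSq (u i) : ℂ) := by
    simp only [Pi.star_apply, Complex.star_def, ← Complex.mul_conj (u i)]
    ring
  rw [hA, hs, fv]
  by_cases h1 : i.val < m
  · simp only [if_pos h1, if_neg (show ¬(m ≤ i.val ∧ i.val < 2*m) by omega),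
      if_neg (show ¬(2*m ≤ i.val) by omega)]
    ring
  · by_cases h2 : i.val < 2*m
    · simp only [if_neg h1, if_pos h2, if_neg (show ¬(i.val < m) from h1),
        if_pos (show m ≤ i.val ∧ i.val < 2*m by omega), if_neg (show ¬(2*m ≤ i.val) by omega)]
      ring
    · simp only [if_neg h1, if_neg h2, if_neg (show ¬(i.val < m) from h1),
        if_neg (show ¬(m ≤ i.val ∧ i.val < 2*m) by omega), if_pos (show 2*m ≤ i.val by omega)]
      ring

lemma self_dot {n : ℕ} (u : Fin n → ℂ) :
    star u ⬝ᵥ u = ((∑ i, normSq (u i) : ℝ) : ℂ) := by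
  rw [dotProduct]
  push_cast
  apply Finset.sum_congr rfl
  intro i _
  simp only [Pi.star_apply, Complex.star_def, ← Complex.mul_conj (u i)]
  ring

/-- the real equations produced by a vector fixed by `P`. -/
lemma real_eqs {n m : ℕ} {P : Matrix (Fin n) (Fin n) ℂ} (hP1 : Pᴴ = P)
    {c : ℂ} (hPAP : P * Amat m n * P = c • P)
    {u : Fin n → ℂ} (hu : P *ᵥ u = u) (hu0 : u ≠ 0) :
    ∃ t0 t1 t2 : ℝ, 0 ≤ t0 ∧ 0 ≤ t1 ∧ 0 ≤ t2 ∧ 0 < t0 + t1 + t2 ∧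
      ((∀ i : Fin n, i.val < m → u i = 0) → t0 = 0) ∧
      ((∀ i : Fin n, m ≤ i.val → i.val < 2*m → u i = 0) → t1 = 0) ∧
      ((∀ i : Fin n, 2*m ≤ i.val → u i = 0) → t2 = 0) ∧
      t0 = c.re * (t0 + t1 + t2) ∧ t1 - t2 = c.im * (t0 + t1 + t2) := by
  set t0 : ℝ := ∑ i, if i.val < m then normSq (u i) else 0 with ht0
  set t1 : ℝ := ∑ i, if m ≤ i.val ∧ i.val < 2*m then normSq (u i) else 0 with ht1
  set t2 : ℝ := ∑ i, if 2*m ≤ i.val then normSq (u i) else 0 with ht2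
  have hsum : t0 + t1 + t2 = ∑ i, normSq (u i) := by
    rw [ht0, ht1, ht2, ← Finset.sum_add_distrib, ← Finset.sum_add_distrib]
    apply Finset.sum_congr rfl
    intro i _
    by_cases h1 : i.val < m
    · simp only [if_pos h1, if_neg (show ¬(m ≤ i.val ∧ i.val < 2*m) by omega),
        if_neg (show ¬(2*m ≤ i.val) by omega)]; ring
    · by_cases h2 : i.val < 2*m
      · simp only [if_neg h1, if_pos (show m ≤ i.val ∧ i.val < 2*m by omega),
          if_neg (show ¬(2*m ≤ i.val) by omega)]; ring
      · simp only [if_neg h1, if_neg (show ¬(m ≤ i.val ∧ i.val < 2*m) by omega),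
          if_pos (show 2*m ≤ i.val by omega)]; ring
  have hnn : ∀ (p : Fin n → Prop) [DecidablePred p],
      (0:ℝ) ≤ ∑ i, if p i then normSq (u i) else 0 := by
    intro p _
    apply Finset.sum_nonneg
    intro i _
    split <;> simp [normSq_nonneg]
  have hpos : 0 < t0 + t1 + t2 := by
    rw [hsum]
    have : ∃ i, u i ≠ 0 := by
      by_contra h
      push_neg at h
      exact hu0 (funext h)
    obtain ⟨i, hi⟩ := this
    apply Finset.sum_pos' (fun i _ => normSq_nonneg _) ⟨i, Finset.mem_univ i, ?_⟩
    simpa [normSq_pos] using hi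
  -- main complex equation
  have hmain := compress_dot hP1 hPAP hu
  rw [diag_dot, self_dot, ← hsum] at hmain
  have hcast : ∀ (p : Fin n → Prop) [DecidablePred p],
      (∑ i, if p i then (normSq (u i) : ℂ) else 0)
        = (((∑ i, if p i then normSq (u i) else 0 : ℝ)) : ℂ) := by
    intro p _
    push_cast
    apply Finset.sum_congr rfl
    intro i _
    split <;> simp
  rw [hcast, hcast, hcast] at hmain
  rw [← ht0, ← ht1, ← ht2] at hmain
  have hre := congrArg Complex.re hmain
  have him := congrArg Complex.im hmain
  simp only [Complex.sub_re, Complex.add_re, Complex.ofReal_re, Complex.mul_re,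
    Complex.I_re, Complex.I_im, Complex.ofReal_im, Complex.sub_im, Complex.add_im,
    Complex.mul_im] at hre him
  refine ⟨t0, t1, t2, hnn _, hnn _, hnn _, hpos, ?_, ?_, ?_, ?_, ?_⟩
  · intro h
    rw [ht0]
    apply Finset.sum_eq_zero
    intro i _
    split
    · next hcond => rw [h i hcond]; simp
    · rfl
  · intro h
    rw [ht1]
    apply Finset.sum_eq_zero
    intro i _
    split
    · next hcond => rw [h i hcond.1 hcond.2]; simp
    · rfl
  · intro h
    rw [ht2]
    apply Finset.sum_eq_zero
    intro i _
    split
    · next hcond => rw [h i hcond]; simp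
    · rfl
  · linarith [hre]
  · linarith [him]

lemma no_anticlique {n m k : ℕ} (hn : n = 3*m) (hk : k = m + 1) :
    ¬ HasAnticlique n k (Vsys m n) := by
  rintro ⟨P, hP1, hP2, hPr, himg⟩
  have hmemA : P * Amat m n * P ∈ Submodule.span ℂ {P} := by
    have : P * Amat m n * P ∈ ((Submodule.span ℂ {P} : Submodule ℂ _) : Set _) := by
      rw [← himg]
      exact Set.mem_image_of_mem _ (Amat_mem m n)
    exact this
  obtain ⟨c, hc⟩ := Submodule.mem_span_singleton.1 hmemA
  have hPAP : P * Amat m n * P = c • P := hc.symm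
  set S := LinearMap.range P.mulVecLin with hSdef
  have hfr : finrank ℂ S = k := hPr
  -- three blocks
  obtain ⟨u0, hu0S, hu00, hu0supp⟩ := exists_supported 0 hn (by norm_num) hk S hfr
  obtain ⟨u1, hu1S, hu10, hu1supp⟩ := exists_supported 1 hn (by norm_num) hk S hfr
  obtain ⟨u2, hu2S, hu20, hu2supp⟩ := exists_supported 2 hn (by norm_num) hk S hfr
  obtain ⟨a0, a1, a2, _, ha1, ha2, hapos, haz, -, -, hare, haim⟩ :=
    real_eqs hP1 hPAP (fixed hP2 hu0S) hu00
  obtain ⟨b0, b1, b2, hb0, _, hb2, hbpos, -, hbz, -, hbre, hbim⟩ :=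
    real_eqs hP1 hPAP (fixed hP2 hu1S) hu10
  obtain ⟨c0, c1, c2, hc0, hc1, _, hcpos, -, -, hcz, hcre, hcim⟩ :=
    real_eqs hP1 hPAP (fixed hP2 hu2S) hu20
  have ha0 : a0 = 0 := haz (fun i h1 => hu0supp i (by omega) (by omega))
  have hb1 : b1 = 0 := hbz (fun i h1 h2 => hu1supp i (by omega) (by omega))
  have hc2 : c2 = 0 := hcz (fun i h1 => hu2supp i (by omega) (by have := i.isLt; omega))
  -- the contradiction
  set x := c.re
  set y := c.im
  rw [ha0] at hare haim hapos
  rw [hb1] at hbre hbim hbpos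
  rw [hc2] at hcre hcim hcpos
  -- hare : 0 = x * (0 + a1 + a2); haim : a1 - a2 = y * (0 + a1 + a2)
  have hx : x = 0 := by
    rcases mul_eq_zero.1 hare.symm with h | h
    · exact h
    · linarith
  rw [hx] at hbre hcre
  have hb0' : b0 = 0 := by linarith
  rw [hb0'] at hbim hbpos
  have hy : y = -1 := by
    have h2 : 0 < b2 := by linarith
    have : -b2 = y * b2 := by linarith [hbim]
    nlinarith
  have hc0' : c0 = 0 := by linarith
  rw [hc0'] at hcim hcpos
  have hy' : y = 1 := by
    have h2 : 0 < c1 := by linarith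
    have : c1 = y * c1 := by linarith [hcim]
    nlinarith
  rw [hy] at hy'
  norm_num at hy'


lemma vecMulVec_mulVec' {n : ℕ} (x y w : Fin n → ℂ) :
    (vecMulVec x y) *ᵥ w = (y ⬝ᵥ w) • x := by
  ext i
  simp [mulVec, vecMulVec_apply, dotProduct, Finset.sum_mul, Finset.mul_sum, mul_assoc,
    mul_comm, mul_left_comm]

lemma mul_vecMulVec {n : ℕ} (P : Matrix (Fin n) (Fin n) ℂ) (x y : Fin n → ℂ) :
    P * vecMulVec x y = vecMulVec (P *ᵥ x) y := by
  ext i j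
  simp only [mul_apply, vecMulVec_apply, mulVec, dotProduct, Finset.sum_mul]
  exact Finset.sum_congr rfl fun l _ => by ring

lemma vecMulVec_mul {n : ℕ} (P : Matrix (Fin n) (Fin n) ℂ) (x y : Fin n → ℂ) :
    vecMulVec x y * P = vecMulVec x (y ᵥ* P) := by
  ext i j
  simp only [mul_apply, vecMulVec_apply, vecMul, dotProduct, Finset.mul_sum]
  exact Finset.sum_congr rfl fun l _ => by ring

lemma li_four {n : ℕ} {u v : Fin n → ℂ} (h : LinearIndependent ℂ ![u, v]) :
    LinearIndependent ℂ
      ![vecMulVec u (star u), vecMulVec u (star v), vecMulVec v (star u), vecMulVec v (star v)] := by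
  rw [Fintype.linearIndependent_iff] at h ⊢
  intro g hg
  have key : ∀ a b : ℂ, a • star u + b • star v = 0 → a = 0 ∧ b = 0 := by
    intro a b hab
    have h2 : (starRingEnd ℂ a) • u + (starRingEnd ℂ b) • v = 0 := by
      have := congrArg star hab
      simpa [star_add, star_smul, funext_iff, Pi.star_apply] using this
    have := h ![starRingEnd ℂ a, starRingEnd ℂ b] (by
      simpa [Fin.sum_univ_two] using h2)
    constructor
    · have h0 := this 0
      simpa using congrArg (starRingEnd ℂ) h0
    · have h1 := this 1
      simpa using congrArg (starRingEnd ℂ) h1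
  -- evaluate the matrix identity on vectors
  have hw : ∀ w : Fin n → ℂ,
      (g 0 * (star u ⬝ᵥ w) + g 1 * (star v ⬝ᵥ w)) • u
        + (g 2 * (star u ⬝ᵥ w) + g 3 * (star v ⬝ᵥ w)) • v = 0 := by
    intro w
    have := congrArg (fun M : Matrix (Fin n) (Fin n) ℂ => M *ᵥ w) hg
    simp only [Fin.sum_univ_four, Matrix.cons_val_zero, Matrix.cons_val_one, Matrix.head_cons,
      Matrix.cons_val_two, Matrix.cons_val_three, Matrix.tail_cons, add_mulVec,
      smul_mulVec, vecMulVec_mulVec', zero_mulVec] at this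
    rw [← this]
    simp only [smul_smul]
    module
  have hcoef : ∀ w : Fin n → ℂ,
      (g 0 * (star u ⬝ᵥ w) + g 1 * (star v ⬝ᵥ w)) = 0 ∧
      (g 2 * (star u ⬝ᵥ w) + g 3 * (star v ⬝ᵥ w)) = 0 := by
    intro w
    have := h ![g 0 * (star u ⬝ᵥ w) + g 1 * (star v ⬝ᵥ w),
                g 2 * (star u ⬝ᵥ w) + g 3 * (star v ⬝ᵥ w)] (by
      simpa [Fin.sum_univ_two] using hw w)
    exact ⟨this 0, this 1⟩
  have h01 : g 0 • star u + g 1 • star v = 0 := by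
    funext i
    have := (hcoef (Pi.single i 1)).1
    simpa [dotProduct_single] using this
  have h23 : g 2 • star u + g 3 • star v = 0 := by
    funext i
    have := (hcoef (Pi.single i 1)).2
    simpa [dotProduct_single] using this
  obtain ⟨e0, e1⟩ := key _ _ h01
  obtain ⟨e2, e3⟩ := key _ _ h23
  intro i
  fin_cases i <;> assumption

lemma no_two_clique {n m : ℕ} : ¬ HasTwoClique n (Vsys m n) := by
  rintro ⟨P, hP1, hP2, hPr, himg⟩
  set S := LinearMap.range P.mulVecLin with hSdef
  have hfr : finrank ℂ S = 2 := hPr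
  let B : Basis (Fin 2) ℂ S := finBasisOfFinrankEq ℂ S hfr
  set u : Fin n → ℂ := (B 0 : Fin n → ℂ) with hudef
  set v : Fin n → ℂ := (B 1 : Fin n → ℂ) with hvdef
  have hli : LinearIndependent ℂ ![u, v] := by
    have h1 : LinearIndependent ℂ (fun i => ((B i : S) : Fin n → ℂ)) :=
      B.linearIndependent.map' S.subtype S.ker_subtype
    have h2 : ![u, v] = fun i => ((B i : S) : Fin n → ℂ) := by
      funext i; fin_cases i <;> rfl
    rwa [h2]
  have hu : P *ᵥ u = u := fixed hP2 (B 0).2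
  have hv : P *ᵥ v = v := fixed hP2 (B 1).2
  have hfix : ∀ x y : Fin n → ℂ, P *ᵥ x = x → P *ᵥ y = y →
      P * vecMulVec x (star y) * P = vecMulVec x (star y) := by
    intro x y hx hy
    rw [mul_vecMulVec, vecMulVec_mul, hx, star_vecMul_self hP1 hy]
  set L : Matrix (Fin n) (Fin n) ℂ →ₗ[ℂ] Matrix (Fin n) (Fin n) ℂ :=
    (LinearMap.mulRight ℂ P).comp (LinearMap.mulLeft ℂ P) with hLdef
  set W := Submodule.map L (Vsys m n) with hWdef
  have hmem : ∀ x y : Fin n → ℂ, P *ᵥ x = x → P *ᵥ y = y →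
      vecMulVec x (star y) ∈ W := by
    intro x y hx hy
    have h1 : vecMulVec x (star y) ∈ (fun A => P * A * P) '' Set.univ :=
      ⟨vecMulVec x (star y), Set.mem_univ _, hfix x y hx hy⟩
    rw [← himg] at h1
    exact h1
  have hWle : finrank ℂ W ≤ 3 := by
    have hW : W = Submodule.span ℂ (⇑L '' {1, Amat m n, (Amat m n)ᴴ}) :=
      Submodule.map_span L _
    have himg3 : ⇑L '' {1, Amat m n, (Amat m n)ᴴ}
        = Set.range ![L 1, L (Amat m n), L ((Amat m n)ᴴ)] := by
      simp only [Set.image_insert_eq, Set.image_singleton, Matrix.range_cons,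
        Matrix.range_empty, Set.union_empty, Set.union_singleton]
      ext z
      simp
      tauto
    rw [hW, himg3]
    have := finrank_range_le_card (R := ℂ) ![L 1, L (Amat m n), L ((Amat m n)ᴴ)]
    simpa [Set.finrank] using this
  have h4 : 4 ≤ finrank ℂ W := by
    have hle : Submodule.span ℂ (Set.range
        ![vecMulVec u (star u), vecMulVec u (star v),
          vecMulVec v (star u), vecMulVec v (star v)]) ≤ W := by
      rw [Submodule.span_le, Set.range_subset_iff]
      intro i
      fin_cases i
      · exact hmem u u hu hu
      · exact hmem u v hu hv
      · exact hmem v u hv hu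
      · exact hmem v v hv hv
    have hmono := Submodule.finrank_mono hle
    rwa [finrank_span_eq_card (li_four hli), Fintype.card_fin] at hmono
  omega

end

end QRAux

theorem stmt_10 (k : ℕ) (hk : 2 ≤ k)
    (existenceHalf : ∀ n : ℕ, 3 * k - 2 ≤ n →
      ∀ V : Submodule ℂ (Matrix (Fin n) (Fin n) ℂ), IsOperatorSystem n V →
        HasTwoClique n V ∨ HasAnticlique n k V) :
    (∃ V : Submodule ℂ (Matrix (Fin (3 * k - 3)) (Fin (3 * k - 3)) ℂ),
      IsOperatorSystem (3 * k - 3) V ∧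
      ¬ HasTwoClique (3 * k - 3) V ∧ ¬ HasAnticlique (3 * k - 3) k V) ∧
    IsLeast {N : ℕ | ∀ n : ℕ, N ≤ n →
      ∀ V : Submodule ℂ (Matrix (Fin n) (Fin n) ℂ), IsOperatorSystem n V →
        HasTwoClique n V ∨ HasAnticlique n k V} (3 * k - 2) := by
  have hn : 3*k-3 = 3*(k-1) := by omega
  have hkk : k = (k-1)+1 := by omega
  refine ⟨⟨QRAux.Vsys (k-1) (3*k-3), QRAux.opSystem _ _, QRAux.no_two_clique,
      QRAux.no_anticlique hn hkk⟩, existenceHalf, ?_⟩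
  intro N hN
  by_contra hlt
  push_neg at hlt
  have h3 : N ≤ 3*k-3 := by omega
  rcases hN (3*k-3) h3 (QRAux.Vsys (k-1) (3*k-3)) (QRAux.opSystem _ _) with h | h
  · exact QRAux.no_two_clique h
  · exact QRAux.no_anticlique hn hkk h
end

section
/- Assume the Li–Poon–Sze theorem: if n ≥ 3k − 2, then for every A ∈ M_n(ℂ) there is an isometry J ∈ M_{n×k}(ℂ) with J* A J scalar. Then for every nonnegative integer ℓ, every operator system 𝒱 ⊆ M_n(ℂ) with dim 𝒱 ≤ 2ℓ + 1 has a k-anticlique whenever n > 3^ℓ (k − 1). -/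
open Matrix Module Submodule

section Aux

variable {n : ℕ}

private lemma mat_one_ne_zero (hn : 0 < n) : (1 : Matrix (Fin n) (Fin n) ℂ) ≠ 0 := by
  intro h
  have := congrFun (congrFun h ⟨0, hn⟩) ⟨0, hn⟩
  simp [Matrix.one_apply] at this

private lemma exists_notin (V W : Submodule ℂ (Matrix (Fin n) (Fin n) ℂ))
    (h : finrank ℂ W < finrank ℂ V) : ∃ A ∈ V, A ∉ W := by
  by_contra h'
  push_neg at h'
  exact absurd (Submodule.finrank_mono (fun x hx => h' x hx)) (by omega)

/-- the standard isometry given by the first k columns of the identity -/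
private lemma exists_isometry (k : ℕ) (h : k ≤ n) :
    ∃ J : Matrix (Fin n) (Fin k) ℂ, Jᴴ * J = 1 := by
  refine ⟨Matrix.of fun i j => if (i : ℕ) = (j : ℕ) then 1 else 0, ?_⟩
  ext a b
  rw [Matrix.mul_apply]
  simp only [Matrix.conjTranspose_apply, Matrix.of_apply, Matrix.one_apply]
  rw [Finset.sum_eq_single (Fin.castLE h a)]
  · by_cases hab : a = b <;> simp [hab, Fin.val_eq_val]
  · intro i _ hi
    have : (i : ℕ) ≠ (a : ℕ) := fun hia => hi (Fin.ext hia)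
    simp [this]
  · simp

/-- dimension bound for the compression -/
private lemma aux_dim {m : ℕ} (f : Matrix (Fin n) (Fin n) ℂ →ₗ[ℂ] Matrix (Fin m) (Fin m) ℂ)
    (V S : Submodule ℂ (Matrix (Fin n) (Fin n) ℂ))
    (L : Submodule ℂ (Matrix (Fin m) (Fin m) ℂ))
    (hSV : S ≤ V) (hL : S.map f ≤ L) (hLr : finrank ℂ L ≤ 1) :
    finrank ℂ (V.map f) + finrank ℂ S ≤ finrank ℂ V + 1 := by
  obtain ⟨T', hT'⟩ := Submodule.exists_isCompl (S.comap V.subtype)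
  set T := T'.map V.subtype with hTdef
  have h1 : (S.comap V.subtype).map V.subtype = S := by
    rw [Submodule.map_comap_subtype]
    exact inf_eq_right.mpr hSV
  have hST : S ⊔ T = V := by
    rw [hTdef, ← h1, ← Submodule.map_sup, hT'.sup_eq_top, Submodule.map_subtype_top]
  have hrank : finrank ℂ S + finrank ℂ T = finrank ℂ V := by
    have h2 := Submodule.finrank_add_eq_of_isCompl hT'
    rw [← h1, Submodule.finrank_map_subtype_eq, hTdef, Submodule.finrank_map_subtype_eq]
    exact h2
  have hmap : V.map f = S.map f ⊔ T.map f := by rw [← Submodule.map_sup, hST]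
  have hsup := Submodule.finrank_sup_add_finrank_inf_eq (S.map f) (T.map f)
  have hSf : finrank ℂ (S.map f) ≤ finrank ℂ L := Submodule.finrank_mono hL
  have hTf : finrank ℂ (T.map f) ≤ finrank ℂ T := Submodule.finrank_map_le f T
  rw [hmap]
  omega

/-- existence of A in V with 1, A, Aᴴ spanning a 3-dimensional space -/
private lemma aux_exists (hn : 0 < n) (V : Submodule ℂ (Matrix (Fin n) (Fin n) ℂ))
    (h1 : (1 : Matrix (Fin n) (Fin n) ℂ) ∈ V) (hstar : ∀ A ∈ V, Aᴴ ∈ V)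
    (hd : 3 ≤ finrank ℂ V) :
    ∃ A ∈ V, 3 ≤ finrank ℂ (span ℂ {(1 : Matrix (Fin n) (Fin n) ℂ), A, Aᴴ}) := by
  have hone : (1 : Matrix (Fin n) (Fin n) ℂ) ≠ 0 := mat_one_ne_zero hn
  have hfr1 : finrank ℂ (span ℂ {(1 : Matrix (Fin n) (Fin n) ℂ)}) = 1 :=
    finrank_span_singleton hone
  by_contra hcon
  push_neg at hcon
  -- every C in V off the scalars has Cᴴ in span {1, C}
  have H : ∀ C ∈ V, C ∉ span ℂ {(1 : Matrix (Fin n) (Fin n) ℂ)} →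
      Cᴴ ∈ span ℂ {(1 : Matrix (Fin n) (Fin n) ℂ), C} := by
    intro C hCV hC1
    by_contra hC
    have lt1 : span ℂ {(1 : Matrix (Fin n) (Fin n) ℂ)} <
        span ℂ {(1 : Matrix (Fin n) (Fin n) ℂ), C} := by
      refine lt_of_le_of_ne (Submodule.span_mono (by simp)) ?_
      intro he
      exact hC1 (he ▸ Submodule.subset_span (by simp))
    have lt2 : span ℂ {(1 : Matrix (Fin n) (Fin n) ℂ), C} <
        span ℂ {(1 : Matrix (Fin n) (Fin n) ℂ), C, Cᴴ} := by
      refine lt_of_le_of_ne (Submodule.span_mono ?_) ?_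
      · intro x hx
        simp only [Set.mem_insert_iff, Set.mem_singleton_iff] at hx ⊢
        tauto
      · intro he
        exact hC (he ▸ Submodule.subset_span (by simp))
    have g1 := Submodule.finrank_lt_finrank_of_lt lt1
    have g2 := Submodule.finrank_lt_finrank_of_lt lt2
    have := hcon C hCV
    omega
  -- pick A ∉ span{1}
  obtain ⟨A, hAV, hA1⟩ := exists_notin V (span ℂ {(1 : Matrix (Fin n) (Fin n) ℂ)}) (by omega)
  -- pick B ∉ span{1, A}
  have hfr2 : finrank ℂ (span ℂ {(1 : Matrix (Fin n) (Fin n) ℂ), A}) ≤ 2 := by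
    have e : ({(1 : Matrix (Fin n) (Fin n) ℂ), A} : Set (Matrix (Fin n) (Fin n) ℂ))
        = insert (1 : Matrix (Fin n) (Fin n) ℂ) {A} := rfl
    rw [e, Submodule.span_insert]
    have hs := Submodule.finrank_sup_add_finrank_inf_eq
      (span ℂ {(1 : Matrix (Fin n) (Fin n) ℂ)}) (span ℂ {A})
    have hA : finrank ℂ (span ℂ {A}) ≤ 1 := by
      rcases eq_or_ne A 0 with h | h
      · rw [h, Submodule.span_zero_singleton]; simp
      · rw [finrank_span_singleton h]
    omega
  obtain ⟨B, hBV, hB1⟩ := exists_notin V (span ℂ {(1 : Matrix (Fin n) (Fin n) ℂ), A}) (by omega)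
  -- coefficients must vanish in relations among 1, A, B
  have coeffs : ∀ r s t : ℂ, r • (1 : Matrix (Fin n) (Fin n) ℂ) + s • A + t • B = 0 →
      r = 0 ∧ s = 0 ∧ t = 0 := by
    intro r s t hrst
    have ht : t = 0 := by
      by_contra ht
      apply hB1
      rw [Submodule.mem_span_pair]
      refine ⟨-r / t, -s / t, ?_⟩
      have h2 : t • B = (-r) • (1 : Matrix (Fin n) (Fin n) ℂ) + (-s) • A := by
        linear_combination (norm := module) hrst
      calc (-r / t) • (1 : Matrix (Fin n) (Fin n) ℂ) + (-s / t) • A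
          = (t⁻¹ : ℂ) • ((-r) • (1 : Matrix (Fin n) (Fin n) ℂ) + (-s) • A) := by
            match_scalars <;> field_simp
        _ = (t⁻¹ : ℂ) • (t • B) := by rw [h2]
        _ = B := by rw [smul_smul, inv_mul_cancel₀ ht, one_smul]
    rw [ht, zero_smul, add_zero] at hrst
    have hs : s = 0 := by
      by_contra hs
      apply hA1
      rw [Submodule.mem_span_singleton]
      refine ⟨-r / s, ?_⟩
      have h2 : s • A = (-r) • (1 : Matrix (Fin n) (Fin n) ℂ) := by
        linear_combination (norm := module) hrst
      calc (-r / s) • (1 : Matrix (Fin n) (Fin n) ℂ)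
          = (s⁻¹ : ℂ) • ((-r) • (1 : Matrix (Fin n) (Fin n) ℂ)) := by
            match_scalars <;> field_simp
        _ = (s⁻¹ : ℂ) • (s • A) := by rw [h2]
        _ = A := by rw [smul_smul, inv_mul_cancel₀ hs, one_smul]
    rw [hs, zero_smul, add_zero] at hrst
    rcases smul_eq_zero.mp hrst with h | h
    · exact ⟨h, hs, ht⟩
    · exact absurd h hone
  -- relations
  obtain ⟨a, b, hab⟩ := Submodule.mem_span_pair.mp (H A hAV hA1)
  have hB1' : B ∉ span ℂ {(1 : Matrix (Fin n) (Fin n) ℂ)} := fun h =>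
    hB1 (Submodule.span_mono (by simp) h)
  obtain ⟨c, d, hcd⟩ := Submodule.mem_span_pair.mp (H B hBV hB1')
  -- consider A + B
  have hABV : A + B ∈ V := V.add_mem hAV hBV
  have hAB1 : A + B ∉ span ℂ {(1 : Matrix (Fin n) (Fin n) ℂ)} := by
    intro h
    obtain ⟨t, ht⟩ := Submodule.mem_span_singleton.mp h
    have := coeffs t (-1) (-1) (by linear_combination (norm := module) ht)
    simpa using this.2.1
  obtain ⟨e, f, hef⟩ := Submodule.mem_span_pair.mp (H (A + B) hABV hAB1)
  have hABh : (A + B)ᴴ = (a + c) • (1 : Matrix (Fin n) (Fin n) ℂ) + b • A + d • B := by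
    rw [Matrix.conjTranspose_add, ← hab, ← hcd]
    module
  rw [hABh] at hef
  have hco1 := coeffs (e - (a + c)) (f - b) (f - d) (by linear_combination (norm := module) hef)
  have hbf : b = f := by have := hco1.2.1; linear_combination -this
  have hdf : d = f := by have := hco1.2.2; linear_combination -this
  -- consider A + I • B
  have hDV : A + Complex.I • B ∈ V := V.add_mem hAV (V.smul_mem _ hBV)
  have hD1 : A + Complex.I • B ∉ span ℂ {(1 : Matrix (Fin n) (Fin n) ℂ)} := by
    intro h
    obtain ⟨t, ht⟩ := Submodule.mem_span_singleton.mp h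
    have := coeffs t (-1) (-Complex.I) (by linear_combination (norm := module) ht)
    simpa using this.2.1
  obtain ⟨g, h, hgh⟩ := Submodule.mem_span_pair.mp (H (A + Complex.I • B) hDV hD1)
  have hDh : (A + Complex.I • B)ᴴ
      = (a - Complex.I * c) • (1 : Matrix (Fin n) (Fin n) ℂ) + b • A + (-(Complex.I * d)) • B := by
    rw [Matrix.conjTranspose_add, Matrix.conjTranspose_smul, ← hab, ← hcd]
    have : (star Complex.I : ℂ) = -Complex.I := by
      simp [Complex.star_def, Complex.conj_I]
    rw [this]
    module
  rw [hDh] at hgh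
  have hco2 := coeffs (g - (a - Complex.I * c)) (h - b) (h * Complex.I - (-(Complex.I * d)))
    (by linear_combination (norm := module) hgh)
  have hhb : h = b := by have := hco2.2.1; linear_combination this
  have hd2 : d = -b := by
    have h2 := hco2.2.2
    rw [hhb] at h2
    have hI := Complex.I_ne_zero
    have h3 : Complex.I * (b + d) = 0 := by linear_combination h2
    rcases mul_eq_zero.mp h3 with h4 | h4
    · exact absurd h4 hI
    · linear_combination h4
  -- b = d and d = -b force b = d = 0
  have hb0 : b = 0 := by
    have : b = d := hbf.trans hdf.symm
    rw [hd2] at this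
    linear_combination this / 2
  -- then A is a multiple of 1
  apply hA1
  rw [Submodule.mem_span_singleton]
  refine ⟨star a, ?_⟩
  have hAh : Aᴴ = a • (1 : Matrix (Fin n) (Fin n) ℂ) := by
    rw [← hab, hb0, zero_smul, add_zero]
  calc star a • (1 : Matrix (Fin n) (Fin n) ℂ)
      = (a • (1 : Matrix (Fin n) (Fin n) ℂ))ᴴ := by
        rw [Matrix.conjTranspose_smul, Matrix.conjTranspose_one]
    _ = Aᴴᴴ := by rw [hAh]
    _ = A := Matrix.conjTranspose_conjTranspose A

end Aux

/-- compression by an isometry, as a linear map -/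
private noncomputable def compress {n m : ℕ} (J : Matrix (Fin n) (Fin m) ℂ) :
    Matrix (Fin n) (Fin n) ℂ →ₗ[ℂ] Matrix (Fin m) (Fin m) ℂ where
  toFun X := Jᴴ * X * J
  map_add' X Y := by simp [Matrix.mul_add, Matrix.add_mul]
  map_smul' c X := by simp [Matrix.mul_smul, Matrix.smul_mul]

private lemma claim
    (LPS : ∀ (n k : ℕ), 3 * k ≤ n + 2 → ∀ A : Matrix (Fin n) (Fin n) ℂ,
      ∃ J : Matrix (Fin n) (Fin k) ℂ, Jᴴ * J = 1 ∧
        ∃ mu : ℂ, Jᴴ * A * J = mu • (1 : Matrix (Fin k) (Fin k) ℂ)) :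
    ∀ (l n k : ℕ), 3 ^ l * (k - 1) < n →
    ∀ V : Submodule ℂ (Matrix (Fin n) (Fin n) ℂ),
      (1 : Matrix (Fin n) (Fin n) ℂ) ∈ V → (∀ A ∈ V, Aᴴ ∈ V) →
      finrank ℂ V ≤ 2 * l + 1 →
      ∃ J : Matrix (Fin n) (Fin k) ℂ, Jᴴ * J = 1 ∧
        ∀ A ∈ V, ∃ mu : ℂ, Jᴴ * A * J = mu • (1 : Matrix (Fin k) (Fin k) ℂ) := by
  intro l
  induction l with
  | zero =>
    intro n k hnk V h1 hstar hdim
    have hn : 0 < n := by omega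
    have hkn : k ≤ n := by simp at hnk; omega
    obtain ⟨J, hJ⟩ := exists_isometry k hkn
    refine ⟨J, hJ, ?_⟩
    intro A hAV
    have hone : (1 : Matrix (Fin n) (Fin n) ℂ) ≠ 0 := mat_one_ne_zero hn
    have hVeq : span ℂ {(1 : Matrix (Fin n) (Fin n) ℂ)} = V := by
      apply Submodule.eq_of_le_of_finrank_le
      · rw [Submodule.span_le, Set.singleton_subset_iff]; exact h1
      · rw [finrank_span_singleton hone]; simpa using hdim
    obtain ⟨c, hc⟩ := Submodule.mem_span_singleton.mp (hVeq ▸ hAV)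
    refine ⟨c, ?_⟩
    rw [← hc]
    simp [Matrix.mul_smul, Matrix.smul_mul, hJ]
  | succ l IH =>
    intro n k hnk V h1 hstar hdim
    have hn : 0 < n := by omega
    by_cases hsmall : finrank ℂ V ≤ 2 * l + 1
    · exact IH n k (lt_of_le_of_lt (Nat.mul_le_mul_right _ (Nat.pow_le_pow_right (by norm_num) (Nat.le_succ l))) hnk) V h1 hstar hsmall
    -- now 2l+2 ≤ finrank V ≤ 2l+3
    obtain ⟨A, hAV, hS⟩ : ∃ A ∈ V,
        finrank ℂ V ≤ 2 * l + finrank ℂ (span ℂ {(1 : Matrix (Fin n) (Fin n) ℂ), A, Aᴴ}) := by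
      rcases le_or_gt 3 (finrank ℂ V) with h3 | h3
      · obtain ⟨A, hAV, hA⟩ := aux_exists hn V h1 hstar h3
        exact ⟨A, hAV, by omega⟩
      · -- finrank V = 2 and l = 0
        have h2 : 2 ≤ finrank ℂ V := by omega
        have hfr1 : finrank ℂ (span ℂ {(1 : Matrix (Fin n) (Fin n) ℂ)}) = 1 :=
          finrank_span_singleton (mat_one_ne_zero hn)
        obtain ⟨A, hAV, hA1⟩ := exists_notin V (span ℂ {(1 : Matrix (Fin n) (Fin n) ℂ)}) (by omega)
        refine ⟨A, hAV, ?_⟩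
        have lt1 : span ℂ {(1 : Matrix (Fin n) (Fin n) ℂ)} <
            span ℂ {(1 : Matrix (Fin n) (Fin n) ℂ), A, Aᴴ} := by
          refine lt_of_le_of_ne (Submodule.span_mono (by simp)) ?_
          intro he
          exact hA1 (he ▸ Submodule.subset_span (by simp))
        have := Submodule.finrank_lt_finrank_of_lt lt1
        omega
    have hnk' : 3 * (3 ^ l * (k - 1)) < n := by
      have e : 3 ^ (l + 1) * (k - 1) = 3 * (3 ^ l * (k - 1)) := by ring
      rw [e] at hnk
      exact hnk
    set m := 3 ^ l * (k - 1) + 1 with hm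
    have h3m : 3 * m ≤ n + 2 := by omega
    obtain ⟨J₁, hJ₁, μ, hμ⟩ := LPS n m h3m A
    set f := compress (n := n) (m := m) J₁ with hf
    have hfapp : ∀ X, f X = J₁ᴴ * X * J₁ := fun X => rfl
    set W := V.map f with hW
    -- W is an operator system
    have h1W : (1 : Matrix (Fin m) (Fin m) ℂ) ∈ W := by
      refine ⟨1, h1, ?_⟩
      rw [hfapp, Matrix.mul_one, hJ₁]
    have hstarW : ∀ Y ∈ W, Yᴴ ∈ W := by
      rintro Y ⟨X, hXV, rfl⟩
      refine ⟨Xᴴ, hstar X hXV, ?_⟩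
      rw [hfapp, hfapp]
      rw [Matrix.conjTranspose_mul, Matrix.conjTranspose_mul, Matrix.conjTranspose_conjTranspose,
        Matrix.mul_assoc]
    -- dimension of W
    have hSle : span ℂ {(1 : Matrix (Fin n) (Fin n) ℂ), A, Aᴴ} ≤ V := by
      rw [Submodule.span_le]
      intro x hx
      simp only [Set.mem_insert_iff, Set.mem_singleton_iff] at hx
      rcases hx with rfl | rfl | rfl
      · exact h1
      · exact hAV
      · exact hstar A hAV
    have hmapS : (span ℂ {(1 : Matrix (Fin n) (Fin n) ℂ), A, Aᴴ}).map f ≤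
        span ℂ {(1 : Matrix (Fin m) (Fin m) ℂ)} := by
      rw [Submodule.map_span, Submodule.span_le]
      rintro y ⟨x, hx, rfl⟩
      simp only [Set.mem_insert_iff, Set.mem_singleton_iff] at hx
      rcases hx with rfl | rfl | rfl
      · rw [hfapp, Matrix.mul_one, hJ₁]
        exact Submodule.subset_span rfl
      · rw [hfapp, hμ]
        exact Submodule.smul_mem _ _ (Submodule.subset_span rfl)
      · rw [hfapp]
        have : J₁ᴴ * Aᴴ * J₁ = (J₁ᴴ * A * J₁)ᴴ := by
          rw [Matrix.conjTranspose_mul, Matrix.conjTranspose_mul,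
            Matrix.conjTranspose_conjTranspose, Matrix.mul_assoc]
        rw [this, hμ, Matrix.conjTranspose_smul, Matrix.conjTranspose_one]
        exact Submodule.smul_mem _ _ (Submodule.subset_span rfl)
    have hL1 : finrank ℂ (span ℂ {(1 : Matrix (Fin m) (Fin m) ℂ)}) ≤ 1 := by
      rw [finrank_span_singleton (mat_one_ne_zero (by omega))]
    have hdimW : finrank ℂ W ≤ 2 * l + 1 := by
      have := aux_dim f V (span ℂ {(1 : Matrix (Fin n) (Fin n) ℂ), A, Aᴴ})
        (span ℂ {(1 : Matrix (Fin m) (Fin m) ℂ)}) hSle hmapS hL1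
      rw [hW]
      omega
    -- apply IH
    obtain ⟨J₂, hJ₂, hW2⟩ := IH m k (by omega) W h1W hstarW hdimW
    refine ⟨J₁ * J₂, ?_, ?_⟩
    · rw [Matrix.conjTranspose_mul, Matrix.mul_assoc, ← Matrix.mul_assoc J₁ᴴ, hJ₁,
        Matrix.one_mul, hJ₂]
    · intro X hXV
      obtain ⟨ν, hν⟩ := hW2 (f X) ⟨X, hXV, rfl⟩
      refine ⟨ν, ?_⟩
      rw [hfapp] at hν
      rw [Matrix.conjTranspose_mul, ← hν]
      simp only [Matrix.mul_assoc]

section RankHelper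
open scoped ComplexOrder

private lemma rank_proj {n k : ℕ} (J : Matrix (Fin n) (Fin k) ℂ) (hJ : Jᴴ * J = 1) :
    (J * Jᴴ).rank = k := by
  have h1r : (J * Jᴴ).rank = J.rank := Matrix.rank_self_mul_conjTranspose J
  have h2r : (Jᴴ * J).rank = J.rank := Matrix.rank_conjTranspose_mul_self J
  rw [h1r, ← h2r, hJ, Matrix.rank_one, Fintype.card_fin]

end RankHelper

-- Assuming the Li-Poon-Sze theorem, for every nonnegative integer l, every operator
-- system V in M_n(C) with dim V ≤ 2l + 1 has a k-anticlique whenever n > 3^l (k-1).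
open Matrix in
theorem stmt_12
    (LPS : ∀ (n k : ℕ), 3 * k ≤ n + 2 → ∀ A : Matrix (Fin n) (Fin n) ℂ,
      ∃ J : Matrix (Fin n) (Fin k) ℂ, Jᴴ * J = 1 ∧
        ∃ mu : ℂ, Jᴴ * A * J = mu • (1 : Matrix (Fin k) (Fin k) ℂ)) :
    ∀ (l n k : ℕ), 3 ^ l * (k - 1) < n →
    ∀ V : Submodule ℂ (Matrix (Fin n) (Fin n) ℂ),
      (1 : Matrix (Fin n) (Fin n) ℂ) ∈ V → (∀ A ∈ V, Aᴴ ∈ V) →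
      Module.finrank ℂ V ≤ 2 * l + 1 →
      ∃ P : Matrix (Fin n) (Fin n) ℂ, Pᴴ = P ∧ P * P = P ∧ P.rank = k ∧
        (fun A => P * A * P) '' (V : Set (Matrix (Fin n) (Fin n) ℂ)) =
          (Submodule.span ℂ {P} : Submodule ℂ (Matrix (Fin n) (Fin n) ℂ)) := by
  intro l n k hnk V h1 hstar hdim
  obtain ⟨J, hJ, hV⟩ := claim LPS l n k hnk V h1 hstar hdim
  have hP2 : J * Jᴴ * (J * Jᴴ) = J * Jᴴ := by
    rw [Matrix.mul_assoc, ← Matrix.mul_assoc Jᴴ, hJ, Matrix.one_mul]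
  refine ⟨J * Jᴴ, ?_, hP2, ?_, ?_⟩
  · rw [Matrix.conjTranspose_mul, Matrix.conjTranspose_conjTranspose]
  · exact rank_proj J hJ
  · ext x
    simp only [Set.mem_image, SetLike.mem_coe]
    constructor
    · rintro ⟨A, hAV, rfl⟩
      obtain ⟨μ, hμ⟩ := hV A hAV
      rw [Submodule.mem_span_singleton]
      refine ⟨μ, ?_⟩
      have e : J * Jᴴ * A * (J * Jᴴ) = J * (Jᴴ * A * J) * Jᴴ := by
        simp only [Matrix.mul_assoc]
      rw [e, hμ, Matrix.mul_smul, Matrix.mul_one, Matrix.smul_mul]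
    · intro hx
      obtain ⟨c, hc⟩ := Submodule.mem_span_singleton.mp hx
      refine ⟨c • 1, V.smul_mem c h1, ?_⟩
      rw [← hc, Matrix.mul_smul, Matrix.mul_one, Matrix.smul_mul, hP2]
end

section
/- Assume the Li–Poon–Sze theorem and assume Weaver's result that every operator system 𝒱 ⊆ M_n(ℂ) with dim 𝒱 ≤ 2 has a ⌈n/2⌉-anticlique. Then for every nonnegative integer ℓ, every operator system 𝒱 ⊆ M_n(ℂ) with dim 𝒱 ≤ 2ℓ + 2 has a k-anticlique whenever n > 2 · 3^ℓ (k − 1). -/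
open Matrix Module Submodule

namespace Stmt13Aux

variable {n m k : ℕ}

/-- Compression by a rectangular matrix, as a linear map. -/
noncomputable def compr (J : Matrix (Fin n) (Fin m) ℂ) :
    Matrix (Fin n) (Fin n) ℂ →ₗ[ℂ] Matrix (Fin m) (Fin m) ℂ where
  toFun X := Jᴴ * X * J
  map_add' X Y := by simp [Matrix.mul_add, Matrix.add_mul]
  map_smul' c X := by simp [Matrix.mul_smul, Matrix.smul_mul]

lemma compr_apply (J : Matrix (Fin n) (Fin m) ℂ) (X : Matrix (Fin n) (Fin n) ℂ) :
    compr J X = Jᴴ * X * J := rfl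

lemma compr_one {J : Matrix (Fin n) (Fin m) ℂ} (hJ : Jᴴ * J = 1) :
    compr J (1 : Matrix (Fin n) (Fin n) ℂ) = 1 := by
  simp [compr_apply, hJ]

lemma compr_conjTranspose (J : Matrix (Fin n) (Fin m) ℂ) (X : Matrix (Fin n) (Fin n) ℂ) :
    (compr J X)ᴴ = compr J Xᴴ := by
  simp [compr_apply, Matrix.conjTranspose_mul, Matrix.mul_assoc]

lemma map_mem_one {J : Matrix (Fin n) (Fin m) ℂ} (hJ : Jᴴ * J = 1)
    {V : Submodule ℂ (Matrix (Fin n) (Fin n) ℂ)} (h1 : (1 : Matrix (Fin n) (Fin n) ℂ) ∈ V) :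
    (1 : Matrix (Fin m) (Fin m) ℂ) ∈ V.map (compr J) :=
  ⟨1, h1, compr_one hJ⟩

lemma map_star {J : Matrix (Fin n) (Fin m) ℂ}
    {V : Submodule ℂ (Matrix (Fin n) (Fin n) ℂ)} (hstar : ∀ A ∈ V, Aᴴ ∈ V) :
    ∀ A ∈ V.map (compr J), Aᴴ ∈ V.map (compr J) := by
  rintro _ ⟨B, hB, rfl⟩
  exact ⟨Bᴴ, hstar B hB, (compr_conjTranspose J B).symm⟩

/-- Pulling back an anticlique along an isometry. -/
lemma pullback (J : Matrix (Fin n) (Fin m) ℂ) (hJ : Jᴴ * J = 1)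
    (V : Submodule ℂ (Matrix (Fin n) (Fin n) ℂ)) (h1 : (1 : Matrix (Fin n) (Fin n) ℂ) ∈ V)
    (Q : Matrix (Fin m) (Fin m) ℂ) (hQh : Qᴴ = Q) (hQi : Q * Q = Q) (hQr : Q.rank = k)
    (hQa : (fun A => Q * A * Q) '' ((V.map (compr J)) : Set (Matrix (Fin m) (Fin m) ℂ)) =
      (Submodule.span ℂ {Q} : Submodule ℂ (Matrix (Fin m) (Fin m) ℂ))) :
    ∃ P : Matrix (Fin n) (Fin n) ℂ, Pᴴ = P ∧ P * P = P ∧ P.rank = k ∧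
      (fun A => P * A * P) '' (V : Set (Matrix (Fin n) (Fin n) ℂ)) =
        (Submodule.span ℂ {P} : Submodule ℂ (Matrix (Fin n) (Fin n) ℂ)) := by
  set P := J * Q * Jᴴ with hP
  have hPh : Pᴴ = P := by
    simp [hP, Matrix.conjTranspose_mul, Matrix.mul_assoc, hQh]
  have hJQJ : ∀ X : Matrix (Fin m) (Fin m) ℂ, Jᴴ * (J * X * Jᴴ) * J = X := by
    intro X
    calc Jᴴ * (J * X * Jᴴ) * J = (Jᴴ * J) * X * (Jᴴ * J) := by
          simp only [Matrix.mul_assoc]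
      _ = X := by rw [hJ]; simp
  have hPi : P * P = P := by
    have h : P * P = J * (Q * ((Jᴴ * J) * (Q * Jᴴ))) := by simp only [hP, Matrix.mul_assoc]
    rw [h, hJ, Matrix.one_mul, ← Matrix.mul_assoc Q Q, hQi, hP, Matrix.mul_assoc]
  have hPr : P.rank = k := by
    have h1' : P.rank ≤ Q.rank := by
      calc P.rank = (J * Q * Jᴴ).rank := rfl
        _ ≤ (J * Q).rank := Matrix.rank_mul_le_left _ _
        _ ≤ Q.rank := Matrix.rank_mul_le_right _ _
    have h2' : Q.rank ≤ P.rank := by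
      have : Q = Jᴴ * P * J := by rw [hP, hJQJ]
      calc Q.rank = (Jᴴ * P * J).rank := by rw [← this]
        _ ≤ (Jᴴ * P).rank := Matrix.rank_mul_le_left _ _
        _ ≤ P.rank := Matrix.rank_mul_le_right _ _
    exact le_antisymm h1' h2' ▸ hQr
  refine ⟨P, hPh, hPi, hPr, ?_⟩
  have himg : (fun A => P * A * P) '' (V : Set (Matrix (Fin n) (Fin n) ℂ)) =
      ((V.map (compr P)) : Set (Matrix (Fin n) (Fin n) ℂ)) := by
    rw [Submodule.map_coe]
    apply Set.image_congr
    intro A _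
    rw [compr_apply, hPh]
  rw [himg]
  have hle1 : V.map (compr P) ≤ span ℂ {P} := by
    rw [Submodule.map_le_iff_le_comap]
    intro B hB
    simp only [Submodule.mem_comap, compr_apply, hPh]
    have hmem : Q * (compr J B) * Q ∈ (Submodule.span ℂ {Q} : Submodule ℂ _) := by
      rw [← SetLike.mem_coe, ← hQa]; exact ⟨compr J B, Submodule.mem_map_of_mem hB, rfl⟩
    obtain ⟨c, hc⟩ := Submodule.mem_span_singleton.mp hmem
    have hPBP : P * B * P = c • P := by
      have h2 : P * B * P = J * (Q * (Jᴴ * B * J) * Q) * Jᴴ := by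
        simp only [hP, Matrix.mul_assoc]
      rw [h2, ← compr_apply, ← hc]
      simp [hP, Matrix.mul_smul, Matrix.smul_mul]
    rw [hPBP]
    exact Submodule.smul_mem _ c (Submodule.mem_span_singleton_self P)
  have hle2 : span ℂ {P} ≤ V.map (compr P) := by
    rw [Submodule.span_le, Set.singleton_subset_iff]
    exact ⟨1, h1, by rw [compr_apply, hPh]; simp [hPi]⟩
  exact congrArg SetLike.coe (le_antisymm hle1 hle2)

/-- The standard inclusion isometry. -/
noncomputable def incl (h : m ≤ n) : Matrix (Fin n) (Fin m) ℂ :=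
  fun i j => if (i : ℕ) = (j : ℕ) then 1 else 0

lemma incl_isometry (h : m ≤ n) : (incl h)ᴴ * incl h = 1 := by
  ext a b
  simp only [Matrix.mul_apply, Matrix.conjTranspose_apply, incl,
    apply_ite (star : ℂ → ℂ), star_one, star_zero, ite_mul, one_mul, zero_mul]
  rw [Finset.sum_eq_single (Fin.castLE h a)]
  · simp only [Fin.coe_castLE, if_pos rfl, Matrix.one_apply]
    by_cases hab : a = b
    · simp [hab]
    · rw [if_neg (fun hc => hab (Fin.ext hc)), if_neg hab]
      simp
  · intro i _ hi
    rw [if_neg (fun hc => hi (Fin.ext (by simpa using hc)))]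
  · exact fun hmem => absurd (Finset.mem_univ _) hmem

lemma finrank_span_singleton_le (x : Matrix (Fin n) (Fin n) ℂ) :
    Module.finrank ℂ (span ℂ ({x} : Set (Matrix (Fin n) (Fin n) ℂ))) ≤ 1 := by
  rcases eq_or_ne x 0 with h | h
  · subst h
    rw [Submodule.span_zero_singleton]
    simp
  · rw [finrank_span_singleton h]

lemma finrank_span_pair_le (x y : Matrix (Fin n) (Fin n) ℂ) :
    Module.finrank ℂ (span ℂ ({x, y} : Set (Matrix (Fin n) (Fin n) ℂ))) ≤ 2 := by
  rw [show ({x, y} : Set (Matrix (Fin n) (Fin n) ℂ)) = insert x {y} from rfl,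
    Submodule.span_insert]
  have h := Submodule.finrank_sup_add_finrank_inf_eq (span ℂ ({x} : Set (Matrix (Fin n) (Fin n) ℂ)))
    (span ℂ ({y} : Set (Matrix (Fin n) (Fin n) ℂ)))
  have h1 := finrank_span_singleton_le x
  have h2 := finrank_span_singleton_le y
  omega

lemma pair_in_submodule {R M : Type*} [Ring R] [AddCommGroup M] [Module R M]
    (p : Submodule R M) {x y : M} (hx : x ∈ p) (hy : y ∈ p)
    (h : LinearIndependent R ![x, y]) :
    LinearIndependent R ![(⟨x, hx⟩ : p), ⟨y, hy⟩] := by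
  apply LinearIndependent.of_comp p.subtype
  have hcomp : (⇑p.subtype) ∘ ![(⟨x, hx⟩ : p), ⟨y, hy⟩] = ![x, y] := by
    funext i; fin_cases i <;> rfl
  rw [hcomp]
  exact h

lemma finrank_ker_ge_two {R M N : Type*} [DivisionRing R] [AddCommGroup M] [Module R M]
    [AddCommGroup N] [Module R N] [Module.Finite R M] (f : M →ₗ[R] N) {x y : M}
    (hx : f x = 0) (hy : f y = 0) (h : LinearIndependent R ![x, y]) :
    2 ≤ Module.finrank R (LinearMap.ker f) := by
  have hind := pair_in_submodule (LinearMap.ker f) (LinearMap.mem_ker.mpr hx)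
    (LinearMap.mem_ker.mpr hy) h
  simpa using hind.fintype_card_le_finrank

lemma selfadj_decomp (A : Matrix (Fin n) (Fin n) ℂ) :
    ∃ B C : Matrix (Fin n) (Fin n) ℂ, Bᴴ = B ∧ Cᴴ = C ∧ A = B + Complex.I • C ∧
      B = (1/2 : ℂ) • (A + Aᴴ) ∧ C = (Complex.I/2 : ℂ) • (Aᴴ - A) := by
  refine ⟨(1/2 : ℂ) • (A + Aᴴ), (Complex.I/2 : ℂ) • (Aᴴ - A), ?_, ?_, ?_, rfl, rfl⟩
  · rw [Matrix.conjTranspose_smul, Matrix.conjTranspose_add, Matrix.conjTranspose_conjTranspose]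
    rw [add_comm Aᴴ A]
    norm_num
  · rw [Matrix.conjTranspose_smul, Matrix.conjTranspose_sub, Matrix.conjTranspose_conjTranspose]
    have hstar : (starRingEnd ℂ) (Complex.I/2) = -(Complex.I/2) := by
      rw [map_div₀, Complex.conj_I, map_ofNat]
      ring
    rw [show (star (Complex.I/2 : ℂ)) = (starRingEnd ℂ) (Complex.I/2) from rfl, hstar]
    module
  · have hcoef : Complex.I * (Complex.I/2) = -(1/2 : ℂ) := by
      rw [mul_div_assoc', Complex.I_mul_I]
      norm_num
    rw [smul_smul, hcoef]
    module

lemma exists_good (hn : 0 < n) (V : Submodule ℂ (Matrix (Fin n) (Fin n) ℂ))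
    (h1 : (1 : Matrix (Fin n) (Fin n) ℂ) ∈ V) (hstar : ∀ A ∈ V, Aᴴ ∈ V)
    (h3 : 3 ≤ Module.finrank ℂ V) :
    ∃ A ∈ V, ∀ a b c : ℂ,
      a • (1 : Matrix (Fin n) (Fin n) ℂ) + b • A + c • Aᴴ = 0 → a = 0 ∧ b = 0 ∧ c = 0 := by
  have hone : (1 : Matrix (Fin n) (Fin n) ℂ) ≠ 0 := by
    intro hzero
    have := congrFun (congrFun hzero ⟨0, hn⟩) ⟨0, hn⟩
    simp [Matrix.one_apply] at this
  by_contra hcon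
  push_neg at hcon
  by_cases hH : ∀ B ∈ V, Bᴴ = B → B ∈ span ℂ ({(1 : Matrix (Fin n) (Fin n) ℂ)} : Set _)
  · have hV : V ≤ span ℂ ({(1 : Matrix (Fin n) (Fin n) ℂ)} : Set _) := by
      intro A hA
      obtain ⟨B, C, hB, hC, hA', hBdef, hCdef⟩ := selfadj_decomp A
      have hBV : B ∈ V := by
        rw [hBdef]; exact Submodule.smul_mem _ _ (add_mem hA (hstar A hA))
      have hCV : C ∈ V := by
        rw [hCdef]; exact Submodule.smul_mem _ _ (sub_mem (hstar A hA) hA)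
      rw [hA']
      exact add_mem (hH B hBV hB) (Submodule.smul_mem _ _ (hH C hCV hC))
    have hmono := Submodule.finrank_mono hV
    have hsing := finrank_span_singleton_le (1 : Matrix (Fin n) (Fin n) ℂ)
    omega
  · push_neg at hH
    obtain ⟨B₀, hB₀V, hB₀sa, hB₀⟩ := hH
    have key : ∀ B ∈ V, Bᴴ = B →
        B ∈ span ℂ ({(1 : Matrix (Fin n) (Fin n) ℂ), B₀} : Set _) := by
      intro B hBV hBsa
      obtain ⟨a, b, c, heq, hne⟩ :=
        hcon (B + Complex.I • B₀) (add_mem hBV (Submodule.smul_mem _ _ hB₀V))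
      have hAH : (B + Complex.I • B₀)ᴴ = B - Complex.I • B₀ := by
        rw [Matrix.conjTranspose_add, Matrix.conjTranspose_smul, hBsa, hB₀sa,
          show (star Complex.I) = -Complex.I from Complex.conj_I]
        module
      rw [hAH] at heq
      have heq2 : a • (1 : Matrix (Fin n) (Fin n) ℂ) + (b + c) • B
          + ((b - c) * Complex.I) • B₀ = 0 := by
        rw [← heq]; module
      by_cases hbc : b + c = 0
      · exfalso
        have hc : c = -b := by linear_combination hbc
        have heq3 : a • (1 : Matrix (Fin n) (Fin n) ℂ) + (2 * b * Complex.I) • B₀ = 0 := by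
          rw [hc] at heq2
          rw [← heq2]; module
        by_cases hb : b = 0
        · rw [hb] at heq3
          simp only [mul_zero, zero_mul, zero_smul, add_zero, smul_eq_zero] at heq3
          rcases heq3 with ha | hbad
          · exact hne ha hb (by rw [hc, hb, neg_zero])
          · exact hone hbad
        · apply hB₀
          rw [Submodule.mem_span_singleton]
          have hcoef : (2 * b * Complex.I) ≠ 0 := by
            simp [hb, Complex.I_ne_zero]
          have h4 : (2 * b * Complex.I) • B₀ = -(a • (1 : Matrix (Fin n) (Fin n) ℂ)) :=
            eq_neg_of_add_eq_zero_right heq3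
          refine ⟨(2 * b * Complex.I)⁻¹ * (-a), ?_⟩
          have h6 := congrArg (fun X : Matrix (Fin n) (Fin n) ℂ =>
            (2 * b * Complex.I)⁻¹ • X) h4
          simp only [smul_smul, inv_mul_cancel₀ hcoef, one_smul] at h6
          rw [h6]
          module
      · rw [Submodule.mem_span_pair]
        have h4 := congrArg (fun X : Matrix (Fin n) (Fin n) ℂ => (b + c)⁻¹ • X) heq2
        simp only [smul_add, smul_smul, smul_zero] at h4
        rw [inv_mul_cancel₀ hbc, one_smul] at h4
        refine ⟨-((b + c)⁻¹ * a), -((b + c)⁻¹ * ((b - c) * Complex.I)), ?_⟩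
        have h7 : B - (-(((b + c)⁻¹ * a) • (1 : Matrix (Fin n) (Fin n) ℂ))
            - ((b + c)⁻¹ * ((b - c) * Complex.I)) • B₀) = 0 := by
          rw [← h4]; module
        have h8 := sub_eq_zero.mp h7
        rw [h8]
        module
    have hV : V ≤ span ℂ ({(1 : Matrix (Fin n) (Fin n) ℂ), B₀} : Set _) := by
      intro A hA
      obtain ⟨B, C, hB, hC, hA', hBdef, hCdef⟩ := selfadj_decomp A
      have hBV : B ∈ V := by
        rw [hBdef]; exact Submodule.smul_mem _ _ (add_mem hA (hstar A hA))
      have hCV : C ∈ V := by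
        rw [hCdef]; exact Submodule.smul_mem _ _ (sub_mem (hstar A hA) hA)
      rw [hA']
      exact add_mem (key B hBV hB) (Submodule.smul_mem _ _ (key C hCV hC))
    have hmono := Submodule.finrank_mono hV
    have hpairle := finrank_span_pair_le (1 : Matrix (Fin n) (Fin n) ℂ) B₀
    omega

end Stmt13Aux

open Stmt13Aux in
-- Assuming the Li-Poon-Sze theorem and Weaver's result that operator systems of
-- dimension ≤ 2 in M_n(C) have a ⌈n/2⌉-anticlique, every operator system with
-- dim ≤ 2l + 2 has a k-anticlique whenever n > 2·3^l (k-1).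
set_option maxHeartbeats 1000000 in
set_option synthInstance.maxHeartbeats 200000 in
open Matrix in
theorem stmt_13
    (LPS : ∀ (n k : ℕ), 3 * k ≤ n + 2 → ∀ A : Matrix (Fin n) (Fin n) ℂ,
      ∃ J : Matrix (Fin n) (Fin k) ℂ, Jᴴ * J = 1 ∧
        ∃ mu : ℂ, Jᴴ * A * J = mu • (1 : Matrix (Fin k) (Fin k) ℂ))
    (Weaver : ∀ (n : ℕ) (V : Submodule ℂ (Matrix (Fin n) (Fin n) ℂ)),
      (1 : Matrix (Fin n) (Fin n) ℂ) ∈ V → (∀ A ∈ V, Aᴴ ∈ V) →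
      Module.finrank ℂ V ≤ 2 →
      ∃ P : Matrix (Fin n) (Fin n) ℂ, Pᴴ = P ∧ P * P = P ∧ P.rank = (n + 1) / 2 ∧
        (fun A => P * A * P) '' (V : Set (Matrix (Fin n) (Fin n) ℂ)) =
          (Submodule.span ℂ {P} : Submodule ℂ (Matrix (Fin n) (Fin n) ℂ))) :
    ∀ (l n k : ℕ), 2 * 3 ^ l * (k - 1) < n →
    ∀ V : Submodule ℂ (Matrix (Fin n) (Fin n) ℂ),
      (1 : Matrix (Fin n) (Fin n) ℂ) ∈ V → (∀ A ∈ V, Aᴴ ∈ V) →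
      Module.finrank ℂ V ≤ 2 * l + 2 →
      ∃ P : Matrix (Fin n) (Fin n) ℂ, Pᴴ = P ∧ P * P = P ∧ P.rank = k ∧
        (fun A => P * A * P) '' (V : Set (Matrix (Fin n) (Fin n) ℂ)) =
          (Submodule.span ℂ {P} : Submodule ℂ (Matrix (Fin n) (Fin n) ℂ)) := by
  intro l
  induction l with
  | zero =>
    intro n k hnk V h1 hstar hdim
    rcases Nat.eq_zero_or_pos k with hk | hk
    · subst hk
      refine ⟨0, by simp, by simp, by simp [Matrix.rank_zero], ?_⟩
      ext x
      simp only [Set.mem_image, Submodule.span_zero_singleton, Submodule.bot_coe,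
        Set.mem_singleton_iff]
      constructor
      · rintro ⟨B, hB, rfl⟩; simp
      · rintro rfl; exact ⟨1, h1, by simp⟩
    · have hnk' : 2 * (k - 1) < n := by simpa using hnk
      have hm : 2 * k - 1 ≤ n := by omega
      have hJ := incl_isometry (n := n) (m := 2 * k - 1) hm
      have hdim2 : Module.finrank ℂ (V.map (compr (incl hm))) ≤ 2 :=
        le_trans (Submodule.finrank_map_le _ _) (by simpa using hdim)
      obtain ⟨Q, hQh, hQi, hQr, hQa⟩ := Weaver (2 * k - 1) (V.map (compr (incl hm)))
        (map_mem_one hJ h1) (map_star hstar) hdim2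
      have hQr' : Q.rank = k := by rw [hQr]; omega
      exact pullback (incl hm) hJ V h1 Q hQh hQi hQr' hQa
  | succ l IH =>
    intro n k hnk V h1 hstar hdim
    by_cases hsmall : Module.finrank ℂ V ≤ 2 * l + 2
    · have hpow : 2 * 3 ^ l * (k - 1) ≤ 2 * 3 ^ (l + 1) * (k - 1) :=
        Nat.mul_le_mul_right _ (Nat.mul_le_mul_left _ (Nat.pow_le_pow_right (by norm_num)
          (Nat.le_succ l)))
      exact IH n k (lt_of_le_of_lt hpow hnk) V h1 hstar hsmall
    · have h3 : 3 ≤ Module.finrank ℂ V := by omega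
      have hn : 0 < n := lt_of_le_of_lt (Nat.zero_le _) hnk
      obtain ⟨A, hAV, hgood⟩ := exists_good hn V h1 hstar h3
      set m := 2 * 3 ^ l * (k - 1) + 1 with hmdef
      have hlt : 2 * 3 ^ l * (k - 1) < m := Nat.lt_succ_self _
      have hmn : 3 * m ≤ n + 2 := by
        have hX : 3 * (2 * 3 ^ l * (k - 1)) < n := by
          calc 3 * (2 * 3 ^ l * (k - 1)) = 2 * 3 ^ (l + 1) * (k - 1) := by ring
            _ < n := hnk
        have hgen : ∀ X : ℕ, 3 * X < n → 3 * (X + 1) ≤ n + 2 := by intro X hx; omega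
        exact hgen _ hX
      obtain ⟨J, hJ, μ, hμ⟩ := LPS n m hmn A
      set ν := (starRingEnd ℂ) μ with hν
      have hφA : compr J A = μ • (1 : Matrix (Fin m) (Fin m) ℂ) := hμ
      have hφAH : compr J Aᴴ = ν • (1 : Matrix (Fin m) (Fin m) ℂ) := by
        rw [← compr_conjTranspose, hφA, Matrix.conjTranspose_smul, Matrix.conjTranspose_one, hν]
        rfl
      have hxV : A - μ • (1 : Matrix (Fin n) (Fin n) ℂ) ∈ V :=
        sub_mem hAV (Submodule.smul_mem _ _ h1)
      have hyV : Aᴴ - ν • (1 : Matrix (Fin n) (Fin n) ℂ) ∈ V :=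
        sub_mem (hstar A hAV) (Submodule.smul_mem _ _ h1)
      set f := (compr J).comp V.subtype with hfdef
      have hxk : f ⟨_, hxV⟩ = 0 := by
        simp only [hfdef, LinearMap.comp_apply, Submodule.subtype_apply,
          map_sub, _root_.map_smul, hφA, compr_one hJ, sub_self]
      have hyk : f ⟨_, hyV⟩ = 0 := by
        simp only [hfdef, LinearMap.comp_apply, Submodule.subtype_apply,
          map_sub, _root_.map_smul, hφAH, compr_one hJ, sub_self]
      have hpair : LinearIndependent ℂ
          ![A - μ • (1 : Matrix (Fin n) (Fin n) ℂ), Aᴴ - ν • (1 : Matrix (Fin n) (Fin n) ℂ)] := by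
        rw [LinearIndependent.pair_iff]
        intro s t hst
        have h0 : (-(s * μ) - t * ν) • (1 : Matrix (Fin n) (Fin n) ℂ) + s • A + t • Aᴴ = 0 := by
          rw [← hst]; module
        obtain ⟨-, hs, ht⟩ := hgood _ _ _ h0
        exact ⟨hs, ht⟩
      have hker2 : 2 ≤ Module.finrank ℂ (LinearMap.ker f) :=
        finrank_ker_ge_two f hxk hyk (pair_in_submodule V hxV hyV hpair)
      have hrn := LinearMap.finrank_range_add_finrank_ker f
      have hrange : LinearMap.range f = V.map (compr J) := by
        rw [hfdef, LinearMap.range_comp, Submodule.range_subtype]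
      rw [hrange] at hrn
      have hWdim : Module.finrank ℂ (V.map (compr J)) ≤ 2 * l + 2 := by omega
      obtain ⟨Q, hQh, hQi, hQr, hQa⟩ := IH m k hlt (V.map (compr J))
        (map_mem_one hJ h1) (map_star hstar) hWdim
      exact pullback J hJ V h1 Q hQh hQi hQr hQa
end
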